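/- Let μ = {μ_t}_{t>0} be a factorizing family over [0,1]×L, and let ν = {ν_t}_{t>0} and ω = {ω_t}_{t>0} be families of probability measures on (𝒞_t,Σ_t) with ν_t ≪ μ_t and ω_t ≪ μ_t for all t>0, satisfying the exact factorization identities ν_{s+t} = (ν_s⊗ν_t)∘⊕_{s,t}^{-1} and ω_{s+t} = (ω_s⊗ω_t)∘⊕_{s,t}^{-1} for all s,t>0. Define the Hellinger affinity H(t) := ∫_{𝒞_t} √((dν_t/dμ_t)(Z) · (dω_t/dμ_t)(Z)) dμ_t(Z). Then H is multiplicative: H(s+t) = H(s)·H(t) for all s,t>0. -/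

import Mathlib

open MeasureTheory Set
open scoped ENNReal NNReal

namespace RandomSets

variable (L : Type) [TopologicalSpace L]

/-- The time strip `[0,t] × L` inside `ℝ × L`. -/
def strip (t : ℝ) : Set (ℝ × L) := Set.Icc (0:ℝ) t ×ˢ (Set.univ : Set L)

lemma isClosed_strip (t : ℝ) : IsClosed (strip L t) :=
  isClosed_Icc.prod isClosed_univ

/-- Closed subsets of `[0,t] × L`. -/
def Cl (t : ℝ) : Type := {F : Set (ℝ × L) // IsClosed F ∧ F ⊆ strip L t}

variable {L}

lemma isClosed_fstImage (f g : ℝ → ℝ) (hg : Continuous g)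
    (hgf : ∀ x, g (f x) = x) (hfg : ∀ x, f (g x) = x)
    {A : Set (ℝ × L)} (hA : IsClosed A) :
    IsClosed ((fun p : ℝ × L => (f p.1, p.2)) '' A) := by
  have h : (fun p : ℝ × L => (f p.1, p.2)) '' A
      = (fun p : ℝ × L => (g p.1, p.2)) ⁻¹' A := by
    ext p
    constructor
    · rintro ⟨q, hq, rfl⟩
      simpa [hgf] using hq
    · intro hp
      exact ⟨(g p.1, p.2), hp, by simp [hfg]⟩
  rw [h]
  exact hA.preimage (by fun_prop)

variable (L)

/-- The Fell topology on `Cl L t`. -/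
def fellTop (t : ℝ) : TopologicalSpace (Cl L t) :=
  TopologicalSpace.generateFrom
    ({S | ∃ U : Set (ℝ × L), IsOpen U ∧
        S = {F : Cl L t | (F.1 ∩ (U ∩ strip L t)).Nonempty}} ∪
     {S | ∃ K : Set (ℝ × L), IsCompact K ∧ K ⊆ strip L t ∧
        S = {F : Cl L t | F.1 ∩ K = ∅}})

instance (t : ℝ) : TopologicalSpace (Cl L t) := fellTop L t

/-- `Σ_t`, the Borel σ-field of the Fell topology. -/
instance (t : ℝ) : MeasurableSpace (Cl L t) := borel (Cl L t)

variable {L}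

/-- Concatenation: `Z₁ ⊕_{s,t} Z₂ = Z₁ ∪ (s + Z₂)` as a closed subset of `[0,s+t] × L`. -/
noncomputable def concat (s t : ℝ) (Z₁ : Cl L s) (Z₂ : Cl L t) : Cl L (s + t) :=
  ⟨(Z₁.1 ∪ (fun p : ℝ × L => (p.1 + s, p.2)) '' Z₂.1) ∩ strip L (s + t), by
    refine ⟨IsClosed.inter ?_ (isClosed_strip L _), Set.inter_subset_right⟩
    exact Z₁.2.1.union (isClosed_fstImage (· + s) (· - s) (by fun_prop)
      (fun x => by ring) (fun x => by ring) Z₂.2.1)⟩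

/-- Concatenation as a map on pairs. -/
noncomputable def concatMap (s t : ℝ) : Cl L s × Cl L t → Cl L (s + t) :=
  fun p => concat s t p.1 p.2

/-- A factorizing family of probability measures over `[0,1] × L` (Definition 2.2 (i)–(ii)). -/
def IsFactorizing (μ : (t : ℝ) → Measure (Cl L t)) : Prop :=
  (∀ t : ℝ, 0 < t → IsProbabilityMeasure (μ t)) ∧
  (∀ s t : ℝ, 0 < s → 0 < t →
    μ (s + t) ≪ Measure.map (concatMap s t) ((μ s).prod (μ t)) ∧
    Measure.map (concatMap s t) ((μ s).prod (μ t)) ≪ μ (s + t)) ∧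
  (∀ t : ℝ, 0 < t → ∀ r ∈ Set.Icc (0:ℝ) t,
    μ t {Z : Cl L t | ∃ ℓ : L, (r, ℓ) ∈ Z.1} = 0)

section TopologyAux

open TopologicalSpace

variable (X : Type*) [TopologicalSpace X] [SecondCountableTopology X]
  [LocallyCompactSpace X] [T2Space X]

/-- A countable basis of open sets with compact closures. -/
def gBasis : Set (Set X) :=
  {b ∈ countableBasis X | IsCompact (closure b)}

lemma gBasis_countable : (gBasis X).Countable :=
  (countable_countableBasis X).mono (Set.sep_subset _ _)

variable {X}

lemma gBasis_isOpen {b : Set X} (hb : b ∈ gBasis X) : IsOpen b :=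
  (isBasis_countableBasis X).isOpen hb.1

lemma gBasis_compact_closure {b : Set X} (hb : b ∈ gBasis X) : IsCompact (closure b) := hb.2

lemma gBasis_shrink {U : Set X} (hU : IsOpen U) {x : X} (hx : x ∈ U) :
    ∃ b ∈ gBasis X, x ∈ b ∧ closure b ⊆ U := by
  obtain ⟨K, hK, hxK, hKU⟩ := exists_compact_subset hU hx
  obtain ⟨b, hb, hxb, hbK⟩ :=
    (isBasis_countableBasis X).exists_subset_of_mem_open hxK isOpen_interior
  have hclb : closure b ⊆ K := closure_minimal (hbK.trans interior_subset) hK.isClosed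
  exact ⟨b, ⟨hb, hK.of_isClosed_subset isClosed_closure hclb⟩, hxb, hclb.trans hKU⟩

lemma isCompact_closure_sUnion {T : Set (Set X)} (hTf : T.Finite) (hT : T ⊆ gBasis X) :
    IsCompact (closure (⋃₀ T)) := by
  have hsub : ⋃₀ T ⊆ ⋃ b ∈ T, closure b := by
    rintro x ⟨b, hbT, hxb⟩
    exact Set.mem_biUnion hbT (subset_closure hxb)
  have hcl : IsClosed (⋃ b ∈ T, closure b) := hTf.isClosed_biUnion fun _ _ => isClosed_closure
  have hcp : IsCompact (⋃ b ∈ T, closure b) :=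
    hTf.isCompact_biUnion fun b hb => gBasis_compact_closure (hT hb)
  exact hcp.of_isClosed_subset isClosed_closure (closure_minimal hsub hcl)

lemma gBasis_cover {K U : Set X} (hK : IsCompact K) (hU : IsOpen U) (hKU : K ⊆ U) :
    ∃ T : Set (Set X), T.Finite ∧ T ⊆ gBasis X ∧ K ⊆ ⋃₀ T ∧ closure (⋃₀ T) ⊆ U := by
  obtain ⟨T, hTsub, hTfin, hTcov⟩ := hK.elim_finite_subcover_image
    (b := {b ∈ gBasis X | closure b ⊆ U}) (c := id)
    (fun b hb => gBasis_isOpen hb.1)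
    (fun x hx => by
      obtain ⟨b, hb, hxb, hbU⟩ := gBasis_shrink hU (hKU hx)
      exact Set.mem_biUnion (⟨hb, hbU⟩ : b ∈ {b ∈ gBasis X | closure b ⊆ U}) hxb)
  refine ⟨T, hTfin, hTsub.trans (Set.sep_subset _ _),
    by simpa [Set.sUnion_eq_biUnion] using hTcov, ?_⟩
  have hsub : ⋃₀ T ⊆ ⋃ b ∈ T, closure b := by
    rintro x ⟨b, hbT, hxb⟩
    exact Set.mem_biUnion hbT (subset_closure hxb)
  have hcl : IsClosed (⋃ b ∈ T, closure b) := hTfin.isClosed_biUnion fun _ _ => isClosed_closure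
  refine (closure_minimal hsub hcl).trans ?_
  exact Set.iUnion₂_subset fun b hb => (hTsub hb).2

end TopologyAux

section FellAux

variable {L : Type} [TopologicalSpace L] [SecondCountableTopology L]
  [LocallyCompactSpace L] [T2Space L]

instance borelSpaceCl (u : ℝ) : BorelSpace (Cl L u) := ⟨rfl⟩

lemma isOpen_hit (u : ℝ) {U : Set (ℝ × L)} (hU : IsOpen U) :
    IsOpen {F : Cl L u | (F.1 ∩ (U ∩ strip L u)).Nonempty} :=
  TopologicalSpace.isOpen_generateFrom_of_mem (Or.inl ⟨U, hU, rfl⟩)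

lemma isOpen_miss (u : ℝ) {K : Set (ℝ × L)} (hK : IsCompact K) (hKs : K ⊆ strip L u) :
    IsOpen {F : Cl L u | F.1 ∩ K = ∅} :=
  TopologicalSpace.isOpen_generateFrom_of_mem (Or.inr ⟨K, hK, hKs, rfl⟩)

lemma isOpen_generateFrom_sUnion' {α : Type*} {g : Set (Set α)} {s : Set α} {C : Set (Set α)}
    (hC : C ⊆ g) (h : s = ⋃₀ C) :
    TopologicalSpace.GenerateOpen g s := by
  rw [h]
  exact TopologicalSpace.GenerateOpen.sUnion C fun t ht =>
    TopologicalSpace.GenerateOpen.basic t (hC ht)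

variable (L)

/-- A countable subbasis for the Fell topology. -/
def fellSub (u : ℝ) : Set (Set (Cl L u)) :=
  ((fun b => {F : Cl L u | (F.1 ∩ (b ∩ strip L u)).Nonempty}) '' gBasis (ℝ × L)) ∪
  ((fun T => {F : Cl L u | F.1 ∩ (closure (⋃₀ T) ∩ strip L u) = ∅}) ''
    {T : Set (Set (ℝ × L)) | T.Finite ∧ T ⊆ gBasis (ℝ × L)})

lemma fellSub_countable (u : ℝ) : (fellSub L u).Countable :=
  ((gBasis_countable (ℝ × L)).image _).union
    ((Set.countable_setOf_finite_subset (gBasis_countable (ℝ × L))).image _)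

lemma fellTop_eq (u : ℝ) : fellTop L u = TopologicalSpace.generateFrom (fellSub L u) := by
  refine le_antisymm (le_generateFrom ?_) ?_
  · rintro S (⟨b, hb, rfl⟩ | ⟨T, ⟨hTf, hTB⟩, rfl⟩)
    · exact isOpen_hit u (gBasis_isOpen hb)
    · exact isOpen_miss u ((isCompact_closure_sUnion hTf hTB).inter_right (isClosed_strip L u))
        Set.inter_subset_right
  · show TopologicalSpace.generateFrom _ ≤ TopologicalSpace.generateFrom _
    apply le_generateFrom
    rintro S (⟨U, hU, rfl⟩ | ⟨K, hK, hKs, rfl⟩)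
    · refine isOpen_generateFrom_sUnion'
        (C := (fun b => {F : Cl L u | (F.1 ∩ (b ∩ strip L u)).Nonempty}) ''
          {b ∈ gBasis (ℝ × L) | b ⊆ U}) ?_ ?_
      · exact (Set.image_mono (Set.sep_subset _ _)).trans Set.subset_union_left
      · ext F
        simp only [Set.mem_sUnion, Set.mem_image, Set.mem_setOf_eq, Set.mem_sep_iff]
        constructor
        · rintro ⟨x, hxF, hxU, hxs⟩
          obtain ⟨b, hb, hxb, hbU⟩ := gBasis_shrink hU hxU
          exact ⟨_, ⟨b, ⟨hb, subset_closure.trans hbU⟩, rfl⟩, ⟨x, hxF, hxb, hxs⟩⟩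
        · rintro ⟨_, ⟨b, ⟨hbB, hbU⟩, rfl⟩, x, hxF, hxb, hxs⟩
          exact ⟨x, hxF, hbU hxb, hxs⟩
    · refine isOpen_generateFrom_sUnion'
        (C := (fun T => {F : Cl L u | F.1 ∩ (closure (⋃₀ T) ∩ strip L u) = ∅}) ''
          {T | (T.Finite ∧ T ⊆ gBasis (ℝ × L)) ∧ K ⊆ ⋃₀ T}) ?_ ?_
      · exact (Set.image_mono (fun T hT => hT.1)).trans Set.subset_union_right
      · ext F
        simp only [Set.mem_sUnion, Set.mem_image, Set.mem_setOf_eq]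
        constructor
        · intro hFK
          have hKU : K ⊆ (F.1)ᶜ := by
            intro x hxK hxF
            exact (Set.eq_empty_iff_forall_notMem.mp hFK x) ⟨hxF, hxK⟩
          obtain ⟨T, hTf, hTB, hKT, hTF⟩ :=
            gBasis_cover hK (isOpen_compl_iff.mpr F.2.1) hKU
          refine ⟨_, ⟨T, ⟨⟨hTf, hTB⟩, hKT⟩, rfl⟩, ?_⟩
          apply Set.eq_empty_iff_forall_notMem.mpr
          rintro x ⟨hxF, hxcl, _⟩
          exact (hTF hxcl) hxF
        · rintro ⟨_, ⟨T, ⟨⟨hTf, hTB⟩, hKT⟩, rfl⟩, hF⟩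
          apply Set.eq_empty_iff_forall_notMem.mpr
          rintro x ⟨hxF, hxK⟩
          exact (Set.eq_empty_iff_forall_notMem.mp hF x)
            ⟨hxF, subset_closure (hKT hxK), hKs hxK⟩

lemma secondCountableTopology_cl (u : ℝ) : SecondCountableTopology (Cl L u) :=
  (TopologicalSpace.isTopologicalBasis_of_subbasis (fellTop_eq L u)).secondCountableTopology
    ((Set.countable_setOf_finite_subset (fellSub_countable L u)).image _)

lemma borelCl_eq (u : ℝ) :
    (borel (Cl L u) : MeasurableSpace (Cl L u)) = MeasurableSpace.generateFrom (fellSub L u) := by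
  haveI := secondCountableTopology_cl L u
  exact borel_eq_generateFrom_of_subbasis (fellTop_eq L u)

end FellAux
section SplitAux

variable {L : Type} [TopologicalSpace L] [SecondCountableTopology L]
  [LocallyCompactSpace L] [T2Space L]

lemma forall_le_of_seq {x c : ℝ} (h : ∀ n : ℕ, x ≤ c + 1 / (n + 1)) : x ≤ c := by
  by_contra hlt
  push_neg at hlt
  obtain ⟨n, hn⟩ := exists_nat_one_div_lt (sub_pos.mpr hlt)
  exact absurd (h n) (by linarith)

lemma forall_ge_of_seq {x c : ℝ} (h : ∀ n : ℕ, c - 1 / (n + 1) ≤ x) : c ≤ x := by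
  by_contra hlt
  push_neg at hlt
  obtain ⟨n, hn⟩ := exists_nat_one_div_lt (sub_pos.mpr hlt)
  exact absurd (h n) (by linarith)

/-- Key measurability lemma: hit sets of `W ∩ (T ×ˢ univ)` where `W` is open and
`T` is approximated from outside by open sets `O n`. -/
lemma measurableSet_hit_band (u : ℝ) {W : Set (ℝ × L)} (hW : IsOpen W) {T : Set ℝ}
    (O : ℕ → Set ℝ) (hO : ∀ n, IsOpen (O n)) (hOmono : ∀ n, O (n + 1) ⊆ O n)
    (hTO : ∀ n, T ∩ Set.Icc 0 u ⊆ O n)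
    (hcap : (⋂ n, closure (O n)) ∩ Set.Icc 0 u ⊆ T) :
    MeasurableSet {Z : Cl L u | (Z.1 ∩ (W ∩ T ×ˢ (Set.univ : Set L))).Nonempty} := by
  have key : {Z : Cl L u | (Z.1 ∩ (W ∩ T ×ˢ (Set.univ : Set L))).Nonempty}
      = ⋃ b ∈ {b ∈ gBasis (ℝ × L) | closure b ⊆ W},
          ⋂ n, {Z : Cl L u | (Z.1 ∩ ((b ∩ O n ×ˢ (Set.univ : Set L)) ∩ strip L u)).Nonempty} := by
    ext Z
    simp only [Set.mem_setOf_eq, Set.mem_iUnion, Set.mem_iInter, Set.mem_sep_iff]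
    constructor
    · rintro ⟨x, hxZ, hxW, hxT, -⟩
      obtain ⟨b, hb, hxb, hbW⟩ := gBasis_shrink hW hxW
      have hxs : x ∈ strip L u := Z.2.2 hxZ
      refine ⟨b, ⟨hb, hbW⟩, fun n => ⟨x, hxZ, ⟨hxb, ?_, trivial⟩, hxs⟩⟩
      exact hTO n ⟨hxT, hxs.1⟩
    · rintro ⟨b, ⟨hbB, hbW⟩, hn⟩
      set C : ℕ → Set (ℝ × L) :=
        fun n => Z.1 ∩ closure b ∩ (closure (O n) ×ˢ (Set.univ : Set L)) with hC
      have hCne : ∀ n, (C n).Nonempty := by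
        intro n
        obtain ⟨x, hxZ, ⟨hxb, hxO, -⟩, -⟩ := hn n
        exact ⟨x, ⟨hxZ, subset_closure hxb⟩, subset_closure hxO, trivial⟩
      have hCcl : ∀ n, IsClosed (C n) :=
        fun n => (Z.2.1.inter isClosed_closure).inter (isClosed_closure.prod isClosed_univ)
      have hCdec : ∀ n, C (n + 1) ⊆ C n := by
        rintro n x ⟨hx1, hx2, -⟩
        exact ⟨hx1, (closure_mono (hOmono n)) hx2, trivial⟩
      have hC0 : IsCompact (C 0) :=
        (gBasis_compact_closure hbB).of_isClosed_subset (hCcl 0)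
          (fun x hx => hx.1.2)
      obtain ⟨x, hx⟩ := IsCompact.nonempty_iInter_of_sequence_nonempty_isCompact_isClosed
        C hCdec hCne hC0 hCcl
      have hxZ : x ∈ Z.1 := (Set.mem_iInter.mp hx 0).1.1
      have hxW : x ∈ W := hbW (Set.mem_iInter.mp hx 0).1.2
      have hxs : x ∈ strip L u := Z.2.2 hxZ
      have hxT : x.1 ∈ T := by
        refine hcap ⟨Set.mem_iInter.mpr fun n => ?_, hxs.1⟩
        exact (Set.mem_iInter.mp hx n).2.1
      exact ⟨x, hxZ, hxW, hxT, trivial⟩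
  rw [key]
  refine MeasurableSet.biUnion ((gBasis_countable (ℝ × L)).mono (Set.sep_subset _ _)) ?_
  intro b hb
  refine MeasurableSet.iInter fun n => ?_
  exact (isOpen_hit u ((gBasis_isOpen hb.1).inter ((hO n).prod isOpen_univ))).measurableSet

/-- First component of the splitting map: restrict to `[0,s] × L`. -/
def split1 (s t : ℝ) (Z : Cl L (s + t)) : Cl L s :=
  ⟨Z.1 ∩ strip L s, (Z.2.1.inter (isClosed_strip L s)), Set.inter_subset_right⟩

/-- Second component of the splitting map: restrict to `[s,s+t] × L` and shift back. -/
def split2 (s t : ℝ) (Z : Cl L (s + t)) : Cl L t :=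
  ⟨(fun p : ℝ × L => (p.1 - s, p.2)) '' (Z.1 ∩ Set.Icc s (s + t) ×ˢ (Set.univ : Set L)), by
    constructor
    · exact isClosed_fstImage (· - s) (· + s) (by fun_prop) (fun x => by ring) (fun x => by ring)
        (Z.2.1.inter (isClosed_Icc.prod isClosed_univ))
    · rintro p ⟨q, ⟨-, hq1, -⟩, rfl⟩
      have h1 : s ≤ q.1 := hq1.1
      have h2 : q.1 ≤ s + t := hq1.2
      exact ⟨⟨show (0:ℝ) ≤ q.1 - s by linarith, show q.1 - s ≤ t by linarith⟩, trivial⟩⟩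

lemma measurable_of_fellSub {β : Type*} [MeasurableSpace β] (u : ℝ) (f : β → Cl L u)
    (h : ∀ S ∈ fellSub L u, MeasurableSet (f ⁻¹' S)) : Measurable f := by
  have h1 : @Measurable β (Cl L u) _ (MeasurableSpace.generateFrom (fellSub L u)) f :=
    measurable_generateFrom h
  intro S hS
  refine h1 ?_
  rw [← borelCl_eq L u]
  exact hS

lemma measurable_split1 (s t : ℝ) (ht : 0 ≤ t) :
    Measurable (split1 (L := L) s t) := by
  apply measurable_of_fellSub
  rintro S (⟨b, hbB, rfl⟩ | ⟨T, ⟨hTf, hTB⟩, rfl⟩)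
  · have hpre : split1 (L := L) s t ⁻¹' {F : Cl L s | (F.1 ∩ (b ∩ strip L s)).Nonempty}
        = {Z : Cl L (s + t) | (Z.1 ∩ (b ∩ Set.Icc 0 s ×ˢ (Set.univ : Set L))).Nonempty} := by
      ext Z
      simp only [Set.mem_preimage, Set.mem_setOf_eq, split1]
      constructor
      · rintro ⟨x, ⟨hxZ, -⟩, hxb, hxs⟩
        exact ⟨x, hxZ, hxb, hxs⟩
      · rintro ⟨x, hxZ, hxb, hxs⟩
        exact ⟨x, ⟨hxZ, hxs⟩, hxb, hxs⟩
    rw [hpre]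
    refine measurableSet_hit_band (s + t) (gBasis_isOpen hbB)
      (fun n => Set.Iio (s + 1 / (n + 1))) (fun n => isOpen_Iio) ?_ ?_ ?_
    · intro n x hx
      simp only [Set.mem_Iio] at hx ⊢
      have h2 : 1 / ((n:ℝ) + 1 + 1) ≤ 1 / ((n:ℝ) + 1) :=
        one_div_le_one_div_of_le (by positivity) (by linarith)
      push_cast at hx
      linarith
    · rintro n x ⟨hx1, -⟩
      simp only [Set.mem_Iio]
      have : (0:ℝ) < 1 / ((n:ℝ) + 1) := by positivity
      push_cast
      linarith [hx1.2]
    · rintro x ⟨hx1, hx2⟩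
      simp only [Set.mem_iInter, closure_Iio] at hx1
      refine ⟨hx2.1, forall_le_of_seq fun n => ?_⟩
      have := hx1 n
      simpa using this
  · have hKsub : closure (⋃₀ T) ∩ strip L s ⊆ strip L s := Set.inter_subset_right
    have hpre : split1 (L := L) s t ⁻¹'
          {F : Cl L s | F.1 ∩ (closure (⋃₀ T) ∩ strip L s) = ∅}
        = {Z : Cl L (s + t) | Z.1 ∩ (closure (⋃₀ T) ∩ strip L s) = ∅} := by
      ext Z
      simp only [Set.mem_preimage, Set.mem_setOf_eq, split1]
      constructor
      · intro h
        apply Set.eq_empty_iff_forall_notMem.mpr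
        rintro x ⟨hxZ, hxK⟩
        exact (Set.eq_empty_iff_forall_notMem.mp h x) ⟨⟨hxZ, hxK.2⟩, hxK⟩
      · intro h
        apply Set.eq_empty_iff_forall_notMem.mpr
        rintro x ⟨⟨hxZ, -⟩, hxK⟩
        exact (Set.eq_empty_iff_forall_notMem.mp h x) ⟨hxZ, hxK⟩
    rw [hpre]
    refine (isOpen_miss (s + t)
      ((isCompact_closure_sUnion hTf hTB).inter_right (isClosed_strip L s)) ?_).measurableSet
    rintro x ⟨-, hx1, -⟩
    exact ⟨⟨hx1.1, by linarith [hx1.2]⟩, trivial⟩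

lemma measurable_split2 (s t : ℝ) (hs : 0 ≤ s) :
    Measurable (split2 (L := L) s t) := by
  apply measurable_of_fellSub
  rintro S (⟨b, hbB, rfl⟩ | ⟨T, ⟨hTf, hTB⟩, rfl⟩)
  · have hpre : split2 (L := L) s t ⁻¹' {F : Cl L t | (F.1 ∩ (b ∩ strip L t)).Nonempty}
        = {Z : Cl L (s + t) |
            (Z.1 ∩ ((fun p : ℝ × L => (p.1 - s, p.2)) ⁻¹' b
              ∩ Set.Icc s (s + t) ×ˢ (Set.univ : Set L))).Nonempty} := by
      ext Z
      simp only [Set.mem_preimage, Set.mem_setOf_eq, split2]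
      constructor
      · rintro ⟨y, ⟨x, ⟨hxZ, hxI, -⟩, rfl⟩, hyb, hys⟩
        exact ⟨x, hxZ, hyb, hxI, trivial⟩
      · rintro ⟨x, hxZ, hxb, hxI, -⟩
        have hI1 : s ≤ x.1 := hxI.1
        have hI2 : x.1 ≤ s + t := hxI.2
        refine ⟨(x.1 - s, x.2), ⟨x, ⟨hxZ, hxI, trivial⟩, rfl⟩, hxb, ?_, trivial⟩
        exact ⟨show (0:ℝ) ≤ x.1 - s by linarith, show x.1 - s ≤ t by linarith⟩
    rw [hpre]
    refine measurableSet_hit_band (s + t)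
      ((gBasis_isOpen hbB).preimage (by fun_prop))
      (fun n => Set.Ioi (s - 1 / (n + 1))) (fun n => isOpen_Ioi) ?_ ?_ ?_
    · intro n x hx
      simp only [Set.mem_Ioi] at hx ⊢
      have h2 : 1 / ((n:ℝ) + 1 + 1) ≤ 1 / ((n:ℝ) + 1) :=
        one_div_le_one_div_of_le (by positivity) (by linarith)
      push_cast at hx
      linarith
    · rintro n x ⟨hx1, hx2⟩
      simp only [Set.mem_Ioi]
      have : (0:ℝ) < 1 / ((n:ℝ) + 1) := by positivity
      push_cast
      linarith [hx1.1]
    · rintro x ⟨hx1, hx2⟩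
      simp only [Set.mem_iInter, closure_Ioi] at hx1
      refine ⟨forall_ge_of_seq fun n => ?_, hx2.2⟩
      have := hx1 n
      simpa using this
  · set K := closure (⋃₀ T) ∩ strip L t with hKdef
    set f : ℝ × L → ℝ × L := fun p => (p.1 - s, p.2) with hf
    have hKcp : IsCompact K :=
      (isCompact_closure_sUnion hTf hTB).inter_right (isClosed_strip L t)
    have hfim : f ⁻¹' K = (fun p : ℝ × L => (p.1 + s, p.2)) '' K := by
      ext p
      constructor
      · intro hp
        exact ⟨(p.1 - s, p.2), hp, by simp⟩
      · rintro ⟨q, hq, rfl⟩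
        simpa [hf] using hq
    have hpre : split2 (L := L) s t ⁻¹' {F : Cl L t | F.1 ∩ K = ∅}
        = {Z : Cl L (s + t) | Z.1 ∩ f ⁻¹' K = ∅} := by
      ext Z
      simp only [Set.mem_preimage, Set.mem_setOf_eq, split2]
      constructor
      · intro h
        apply Set.eq_empty_iff_forall_notMem.mpr
        rintro x ⟨hxZ, hxK⟩
        have hxI : x ∈ Set.Icc s (s + t) ×ˢ (Set.univ : Set L) := by
          have h1 : (0:ℝ) ≤ x.1 - s := hxK.2.1.1
          have h2 : x.1 - s ≤ t := hxK.2.1.2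
          exact ⟨⟨by linarith, by linarith⟩, trivial⟩
        exact (Set.eq_empty_iff_forall_notMem.mp h (f x))
          ⟨⟨x, ⟨hxZ, hxI⟩, rfl⟩, hxK⟩
      · intro h
        apply Set.eq_empty_iff_forall_notMem.mpr
        rintro y ⟨⟨x, ⟨hxZ, -⟩, rfl⟩, hyK⟩
        exact (Set.eq_empty_iff_forall_notMem.mp h x) ⟨hxZ, hyK⟩
    rw [hpre, hfim]
    refine (isOpen_miss (s + t) (hKcp.image (by fun_prop)) ?_).measurableSet
    rintro p ⟨q, hq, rfl⟩
    have hI1 : (0:ℝ) ≤ q.1 := hq.2.1.1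
    have hI2 : q.1 ≤ t := hq.2.1.2
    exact ⟨⟨show (0:ℝ) ≤ q.1 + s by linarith, show q.1 + s ≤ s + t by linarith⟩, trivial⟩

/-- The splitting map, a measurable two-sided inverse (a.e.) of concatenation. -/
def splitMap (s t : ℝ) : Cl L (s + t) → Cl L s × Cl L t :=
  fun Z => (split1 s t Z, split2 s t Z)

lemma measurable_splitMap (s t : ℝ) (hs : 0 ≤ s) (ht : 0 ≤ t) :
    Measurable (splitMap (L := L) s t) :=
  (measurable_split1 s t ht).prodMk (measurable_split2 s t hs)

end SplitAux
section ConcatSplit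

variable {L : Type} [TopologicalSpace L] [SecondCountableTopology L]
  [LocallyCompactSpace L] [T2Space L]

lemma split_concat (s t : ℝ) (hs : 0 < s) (ht : 0 < t) (Z₁ : Cl L s) (Z₂ : Cl L t)
    (h1 : ∀ ℓ : L, (s, ℓ) ∉ Z₁.1) (h2 : ∀ ℓ : L, ((0:ℝ), ℓ) ∉ Z₂.1) :
    splitMap s t (concatMap s t (Z₁, Z₂)) = (Z₁, Z₂) := by
  set sh : ℝ × L → ℝ × L := fun p => (p.1 + s, p.2) with hsh
  have hC : (concatMap s t (Z₁, Z₂)).1 = Z₁.1 ∪ sh '' Z₂.1 := by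
    show (Z₁.1 ∪ sh '' Z₂.1) ∩ strip L (s + t) = _
    apply Set.inter_eq_left.mpr
    rintro x (hx | ⟨q, hq, rfl⟩)
    · have hx' := Z₁.2.2 hx
      exact ⟨⟨hx'.1.1, by linarith [hx'.1.2]⟩, trivial⟩
    · have h1 : (0:ℝ) ≤ q.1 := (Z₂.2.2 hq).1.1
      have h2 : q.1 ≤ t := (Z₂.2.2 hq).1.2
      exact ⟨⟨show (0:ℝ) ≤ q.1 + s by linarith, show q.1 + s ≤ s + t by linarith⟩, trivial⟩
  have e1 : split1 s t (concatMap s t (Z₁, Z₂)) = Z₁ := by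
    apply Subtype.ext
    show (concatMap s t (Z₁, Z₂)).1 ∩ strip L s = Z₁.1
    rw [hC]
    ext x
    constructor
    · rintro ⟨hx | ⟨q, hq, rfl⟩, hxs⟩
      · exact hx
      · exfalso
        have hle : q.1 + s ≤ s := hxs.1.2
        have hq0 : q.1 = 0 := le_antisymm (by linarith) (Z₂.2.2 hq).1.1
        have hqe : q = ((0:ℝ), q.2) := Prod.ext hq0 rfl
        exact h2 q.2 (hqe ▸ hq)
    · intro hx
      exact ⟨Or.inl hx, Z₁.2.2 hx⟩
  have e2 : split2 s t (concatMap s t (Z₁, Z₂)) = Z₂ := by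
    apply Subtype.ext
    show (fun p : ℝ × L => (p.1 - s, p.2)) ''
      ((concatMap s t (Z₁, Z₂)).1 ∩ Set.Icc s (s + t) ×ˢ (Set.univ : Set L)) = Z₂.1
    rw [hC]
    have hband : (Z₁.1 ∪ sh '' Z₂.1) ∩ Set.Icc s (s + t) ×ˢ (Set.univ : Set L)
        = sh '' Z₂.1 := by
      ext x
      constructor
      · rintro ⟨hx | hx, hxb⟩
        · exfalso
          have hx' := Z₁.2.2 hx
          have hxs : x.1 = s := le_antisymm hx'.1.2 hxb.1.1
          have hxe : x = (s, x.2) := Prod.ext hxs rfl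
          exact h1 x.2 (hxe ▸ hx)
        · exact hx
      · rintro ⟨q, hq, rfl⟩
        have h1 : (0:ℝ) ≤ q.1 := (Z₂.2.2 hq).1.1
        have h2 : q.1 ≤ t := (Z₂.2.2 hq).1.2
        exact ⟨Or.inr ⟨q, hq, rfl⟩,
          ⟨show s ≤ q.1 + s by linarith, show q.1 + s ≤ s + t by linarith⟩, trivial⟩
    rw [hband]
    ext y
    constructor
    · rintro ⟨_, ⟨q, hq, rfl⟩, rfl⟩
      simpa [hsh] using hq
    · intro hy
      exact ⟨sh y, ⟨y, hy, rfl⟩, by simp [hsh]⟩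
  show (split1 s t (concatMap s t (Z₁, Z₂)), split2 s t (concatMap s t (Z₁, Z₂))) = (Z₁, Z₂)
  rw [e1, e2]

lemma ae_splitMap_concatMap {s t : ℝ} (hs : 0 < s) (ht : 0 < t)
    (μs : Measure (Cl L s)) (μt : Measure (Cl L t))
    [SigmaFinite μs] [SigmaFinite μt]
    (hA : μs {Z : Cl L s | ∃ ℓ : L, (s, ℓ) ∈ Z.1} = 0)
    (hB : μt {Z : Cl L t | ∃ ℓ : L, ((0:ℝ), ℓ) ∈ Z.1} = 0) :
    ∀ᵐ p ∂(μs.prod μt), splitMap s t (concatMap s t p) = p := by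
  obtain ⟨A', hA'sub, hA'm, hA'0⟩ := exists_measurable_superset_of_null hA
  obtain ⟨B', hB'sub, hB'm, hB'0⟩ := exists_measurable_superset_of_null hB
  have hnull : (μs.prod μt) (A' ×ˢ Set.univ ∪ Set.univ ×ˢ B') = 0 := by
    apply measure_union_null
    · rw [Measure.prod_prod, hA'0, zero_mul]
    · rw [Measure.prod_prod, hB'0, mul_zero]
  rw [MeasureTheory.ae_iff]
  refine measure_mono_null ?_ hnull
  intro p hp
  by_contra hcon
  simp only [Set.mem_union, Set.mem_prod, Set.mem_univ, and_true, true_and] at hcon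
  push_neg at hcon
  refine hp ?_
  have := split_concat s t hs ht p.1 p.2
    (fun ℓ hℓ => hcon.1 (hA'sub ⟨ℓ, hℓ⟩))
    (fun ℓ hℓ => hcon.2 (hB'sub ⟨ℓ, hℓ⟩))
  simpa using this

end ConcatSplit
section HellingerAux

variable {α : Type*} {β : Type*} [MeasurableSpace α] [MeasurableSpace β]

/-- The Hellinger affinity as a lower integral. -/
noncomputable def Jaff (P Q R : Measure α) : ℝ≥0∞ :=
  ∫⁻ x, (P.rnDeriv R x * Q.rnDeriv R x) ^ (2⁻¹ : ℝ) ∂ R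

lemma sqrt_toReal_eq (a b : ℝ≥0∞) :
    Real.sqrt (a.toReal * b.toReal) = ((a * b) ^ (2⁻¹ : ℝ)).toReal := by
  rw [← ENNReal.toReal_mul, Real.sqrt_eq_rpow, ← ENNReal.toReal_rpow]
  norm_num

lemma ennreal_rpow_half_mul_self (c : ℝ≥0∞) : (c * c) ^ (2⁻¹ : ℝ) = c := by
  rw [← pow_two, ← ENNReal.rpow_natCast, ← ENNReal.rpow_mul]
  norm_num

lemma integral_sqrt_eq_toReal_Jaff (P Q R : Measure α)
    [IsFiniteMeasure P] [IsFiniteMeasure Q] :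
    ∫ x, Real.sqrt ((P.rnDeriv R x).toReal * (Q.rnDeriv R x).toReal) ∂ R
      = (Jaff P Q R).toReal := by
  rw [Jaff, ← integral_toReal]
  · exact integral_congr_ae (Filter.Eventually.of_forall fun x => sqrt_toReal_eq _ _)
  · exact (((P.measurable_rnDeriv R).mul (Q.measurable_rnDeriv R)).pow_const _).aemeasurable
  · filter_upwards [P.rnDeriv_lt_top R, Q.rnDeriv_lt_top R] with x h1 h2
    exact ENNReal.rpow_lt_top_of_nonneg (by norm_num) (ENNReal.mul_ne_top h1.ne h2.ne)

lemma Jaff_eq_of_ac {P Q R R' : Measure α} [IsFiniteMeasure P] [IsFiniteMeasure Q]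
    [IsFiniteMeasure R] [IsFiniteMeasure R']
    (hPR : P ≪ R) (hQR : Q ≪ R) (hRR' : R ≪ R') :
    Jaff P Q R' = Jaff P Q R := by
  have hP := Measure.rnDeriv_mul_rnDeriv (ν := R) (κ := R') hPR
  have hQ := Measure.rnDeriv_mul_rnDeriv (ν := R) (κ := R') hQR
  have hcongr : (fun x => (P.rnDeriv R' x * Q.rnDeriv R' x) ^ (2⁻¹ : ℝ))
      =ᵐ[R'] fun x => R.rnDeriv R' x
        * ((P.rnDeriv R x * Q.rnDeriv R x) ^ (2⁻¹ : ℝ)) := by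
    filter_upwards [hP, hQ] with x h1 h2
    simp only [Pi.mul_apply] at h1 h2
    rw [← h1, ← h2]
    set a := P.rnDeriv R x
    set b := Q.rnDeriv R x
    set c := R.rnDeriv R' x
    have : a * c * (b * c) = a * b * (c * c) := by ring
    rw [this, ENNReal.mul_rpow_of_nonneg _ _ (by norm_num : (0:ℝ) ≤ 2⁻¹),
      ennreal_rpow_half_mul_self]
    ring
  rw [Jaff, lintegral_congr_ae hcongr,
    lintegral_rnDeriv_mul (f := fun x => (P.rnDeriv R x * Q.rnDeriv R x) ^ (2⁻¹ : ℝ)) hRR'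
      ((((P.measurable_rnDeriv R).mul (Q.measurable_rnDeriv R)).pow_const _).aemeasurable)]
  rfl

lemma rnDeriv_map_eq {φ : α → β} {ψ : β → α} (hψ : Measurable ψ)
    {P Q : Measure α} [IsFiniteMeasure P] [IsFiniteMeasure Q]
    (hφ : AEMeasurable φ Q) (hPQ : P ≪ Q) (hinv : ∀ᵐ x ∂Q, ψ (φ x) = x) :
    (P.map φ).rnDeriv (Q.map φ) =ᵐ[Q.map φ] (P.rnDeriv Q) ∘ ψ := by
  have hφφ₀ : φ =ᵐ[Q] hφ.mk φ := hφ.ae_eq_mk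
  set φ₀ := hφ.mk φ with hφ₀def
  have hφ₀ : Measurable φ₀ := hφ.measurable_mk
  have hmapQ : Q.map φ = Q.map φ₀ := Measure.map_congr hφφ₀
  have hmapP : P.map φ = P.map φ₀ := Measure.map_congr (hPQ.ae_le hφφ₀)
  have hinv₀ : ∀ᵐ x ∂Q, ψ (φ₀ x) = x := by
    filter_upwards [hinv, hφφ₀] with x h1 h2
    rw [← h2]; exact h1
  rw [hmapQ, hmapP]
  haveI : IsFiniteMeasure (Q.map φ₀) := by
    constructor
    rw [Measure.map_apply hφ₀ MeasurableSet.univ]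
    exact measure_lt_top _ _
  have hgm : Measurable ((P.rnDeriv Q) ∘ ψ) := (P.measurable_rnDeriv Q).comp hψ
  have key : (Q.map φ₀).withDensity ((P.rnDeriv Q) ∘ ψ) = P.map φ₀ := by
    ext A hA
    rw [withDensity_apply _ hA, setLIntegral_map hA hgm hφ₀,
      Measure.map_apply hφ₀ hA, ← Measure.setLIntegral_rnDeriv hPQ (φ₀ ⁻¹' A)]
    apply lintegral_congr_ae
    filter_upwards [ae_restrict_of_ae hinv₀] with x hx
    simp [Function.comp, hx]
  rw [← key]
  exact Measure.rnDeriv_withDensity (Q.map φ₀) hgm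

lemma Jaff_map_eq {φ : α → β} {ψ : β → α} (hψ : Measurable ψ)
    {P Q R : Measure α} [IsFiniteMeasure P] [IsFiniteMeasure Q] [IsFiniteMeasure R]
    (hφ : AEMeasurable φ R) (hPR : P ≪ R) (hQR : Q ≪ R)
    (hinv : ∀ᵐ x ∂ R, ψ (φ x) = x) :
    Jaff (P.map φ) (Q.map φ) (R.map φ) = Jaff P Q R := by
  have h1 := rnDeriv_map_eq hψ hφ hPR hinv
  have h2 := rnDeriv_map_eq hψ hφ hQR hinv
  have hcongr : (fun y => ((P.map φ).rnDeriv (R.map φ) y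
        * (Q.map φ).rnDeriv (R.map φ) y) ^ (2⁻¹ : ℝ))
      =ᵐ[R.map φ] fun y => (P.rnDeriv R (ψ y) * Q.rnDeriv R (ψ y)) ^ (2⁻¹ : ℝ) := by
    filter_upwards [h1, h2] with y hy1 hy2
    rw [hy1, hy2]; rfl
  rw [Jaff, lintegral_congr_ae hcongr,
    lintegral_map' (f := fun y => (P.rnDeriv R (ψ y) * Q.rnDeriv R (ψ y)) ^ (2⁻¹ : ℝ))
      ((((P.measurable_rnDeriv R).comp hψ).mul
        ((Q.measurable_rnDeriv R).comp hψ)).pow_const _).aemeasurable hφ]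
  refine lintegral_congr_ae ?_
  filter_upwards [hinv] with x hx
  simp only [hx]

lemma rnDeriv_prod_eq {P R : Measure α} {Q S : Measure β}
    [IsFiniteMeasure P] [IsFiniteMeasure Q] [IsFiniteMeasure R] [IsFiniteMeasure S]
    (hPR : P ≪ R) (hQS : Q ≪ S) :
    (P.prod Q).rnDeriv (R.prod S)
      =ᵐ[R.prod S] fun p => P.rnDeriv R p.1 * Q.rnDeriv S p.2 := by
  have hm : Measurable fun p : α × β => P.rnDeriv R p.1 * Q.rnDeriv S p.2 :=
    ((P.measurable_rnDeriv R).comp measurable_fst).mul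
      ((Q.measurable_rnDeriv S).comp measurable_snd)
  have key : (R.prod S).withDensity (fun p => P.rnDeriv R p.1 * Q.rnDeriv S p.2)
      = P.prod Q := by
    refine (Measure.prod_eq (μ := P) (ν := Q) fun A B hA hB => ?_).symm
    rw [withDensity_apply _ (hA.prod hB), ← Measure.prod_restrict,
      lintegral_prod_mul ((P.measurable_rnDeriv R).aemeasurable)
        ((Q.measurable_rnDeriv S).aemeasurable),
      Measure.setLIntegral_rnDeriv hPR, Measure.setLIntegral_rnDeriv hQS]
  rw [← key]
  exact Measure.rnDeriv_withDensity (R.prod S) hm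

lemma Jaff_prod_eq {P R : Measure α} {Q S : Measure β}
    [IsFiniteMeasure P] [IsFiniteMeasure Q] [IsFiniteMeasure R] [IsFiniteMeasure S]
    {P' : Measure α} {Q' : Measure β} [IsFiniteMeasure P'] [IsFiniteMeasure Q']
    (hPR : P ≪ R) (hQS : Q ≪ S) (hP'R : P' ≪ R) (hQ'S : Q' ≪ S) :
    Jaff (P.prod Q) (P'.prod Q') (R.prod S) = Jaff P P' R * Jaff Q Q' S := by
  have h1 := rnDeriv_prod_eq hPR hQS
  have h2 := rnDeriv_prod_eq hP'R hQ'S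
  have hcongr : (fun p => ((P.prod Q).rnDeriv (R.prod S) p
        * (P'.prod Q').rnDeriv (R.prod S) p) ^ (2⁻¹ : ℝ))
      =ᵐ[R.prod S] fun p => (P.rnDeriv R p.1 * P'.rnDeriv R p.1) ^ (2⁻¹ : ℝ)
        * (Q.rnDeriv S p.2 * Q'.rnDeriv S p.2) ^ (2⁻¹ : ℝ) := by
    filter_upwards [h1, h2] with p hp1 hp2
    rw [hp1, hp2, ← ENNReal.mul_rpow_of_nonneg _ _ (by norm_num : (0:ℝ) ≤ 2⁻¹)]
    congr 1
    ring
  rw [Jaff, lintegral_congr_ae hcongr,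
    lintegral_prod_mul (f := fun x => (P.rnDeriv R x * P'.rnDeriv R x) ^ (2⁻¹ : ℝ))
      (g := fun y => (Q.rnDeriv S y * Q'.rnDeriv S y) ^ (2⁻¹ : ℝ))
      (((P.measurable_rnDeriv R).mul (P'.measurable_rnDeriv R)).pow_const _).aemeasurable
      (((Q.measurable_rnDeriv S).mul (Q'.measurable_rnDeriv S)).pow_const _).aemeasurable]
  rfl

end HellingerAux
/-- Corollary 3.6: let `μ` be a factorizing family over `[0,1] × L`
and `ν, ω` dominated families of probability measures factorizing exactly.  Then the
Hellinger affinity `H(t) = ∫ √((dν_t/dμ_t)(dω_t/dμ_t)) dμ_t` is multiplicative: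
`H(s+t) = H(s)·H(t)`. -/
theorem hellinger_affinity_multiplicative
    [SecondCountableTopology L] [LocallyCompactSpace L] [T2Space L]
    (μ ν ω : (t : ℝ) → Measure (Cl L t)) (hμ : IsFactorizing μ)
    (hνprob : ∀ t : ℝ, 0 < t → IsProbabilityMeasure (ν t))
    (hωprob : ∀ t : ℝ, 0 < t → IsProbabilityMeasure (ω t))
    (hνac : ∀ t : ℝ, 0 < t → ν t ≪ μ t)
    (hωac : ∀ t : ℝ, 0 < t → ω t ≪ μ t)
    (hνfact : ∀ s t : ℝ, 0 < s → 0 < t →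
      ν (s + t) = Measure.map (concatMap s t) ((ν s).prod (ν t)))
    (hωfact : ∀ s t : ℝ, 0 < s → 0 < t →
      ω (s + t) = Measure.map (concatMap s t) ((ω s).prod (ω t))) :
    ∀ s t : ℝ, 0 < s → 0 < t →
      (∫ Z, Real.sqrt ((((ν (s + t)).rnDeriv (μ (s + t))) Z).toReal *
          (((ω (s + t)).rnDeriv (μ (s + t))) Z).toReal) ∂(μ (s + t)))
      = (∫ Z, Real.sqrt ((((ν s).rnDeriv (μ s)) Z).toReal *
          (((ω s).rnDeriv (μ s)) Z).toReal) ∂(μ s)) *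
        (∫ Z, Real.sqrt ((((ν t).rnDeriv (μ t)) Z).toReal *
          (((ω t).rnDeriv (μ t)) Z).toReal) ∂(μ t)) := by
  intro s t hs ht
  have hst : 0 < s + t := by linarith
  haveI hμs : IsProbabilityMeasure (μ s) := hμ.1 s hs
  haveI hμt : IsProbabilityMeasure (μ t) := hμ.1 t ht
  haveI hμst : IsProbabilityMeasure (μ (s + t)) := hμ.1 (s + t) hst
  haveI := hνprob s hs; haveI := hνprob t ht; haveI := hνprob (s + t) hst
  haveI := hωprob s hs; haveI := hωprob t ht; haveI := hωprob (s + t) hst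
  set φ := concatMap (L := L) s t with hφdef
  have hφae : AEMeasurable φ ((μ s).prod (μ t)) := by
    by_contra h
    have hmap0 : Measure.map φ ((μ s).prod (μ t)) = 0 := Measure.map_of_not_aemeasurable h
    have hac := (hμ.2.1 s t hs ht).1
    rw [hmap0] at hac
    have h1 : μ (s + t) Set.univ = 0 := hac (by simp)
    rw [measure_univ] at h1
    exact one_ne_zero h1
  have hνacp : (ν s).prod (ν t) ≪ (μ s).prod (μ t) :=
    Measure.AbsolutelyContinuous.prod (hνac s hs) (hνac t ht)
  have hωacp : (ω s).prod (ω t) ≪ (μ s).prod (μ t) :=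
    Measure.AbsolutelyContinuous.prod (hωac s hs) (hωac t ht)
  have hinv : ∀ᵐ p ∂((μ s).prod (μ t)), splitMap s t (φ p) = p :=
    ae_splitMap_concatMap hs ht (μ s) (μ t)
      (hμ.2.2 s hs s ⟨le_of_lt hs, le_refl s⟩)
      (hμ.2.2 t ht 0 ⟨le_refl 0, le_of_lt ht⟩)
  have hψm : Measurable (splitMap (L := L) s t) := measurable_splitMap s t hs.le ht.le
  set m := Measure.map φ ((μ s).prod (μ t)) with hm
  haveI : IsProbabilityMeasure m := Measure.isProbabilityMeasure_map hφae
  have hνm : ν (s + t) ≪ m := (hνac (s + t) hst).trans (hμ.2.1 s t hs ht).1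
  have hωm : ω (s + t) ≪ m := (hωac (s + t) hst).trans (hμ.2.1 s t hs ht).1
  rw [integral_sqrt_eq_toReal_Jaff, integral_sqrt_eq_toReal_Jaff,
    integral_sqrt_eq_toReal_Jaff]
  rw [Jaff_eq_of_ac hνm hωm (hμ.2.1 s t hs ht).2]
  rw [hνfact s t hs ht, hωfact s t hs ht, hm]
  rw [Jaff_map_eq hψm hφae hνacp hωacp hinv]
  rw [Jaff_prod_eq (hνac s hs) (hνac t ht) (hωac s hs) (hωac t ht)]
  rw [ENNReal.toReal_mul]


end RandomSets
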